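/- Let G : ℝ^N → ℝ^N be non-expansive with a nonempty set of fixed points, and let α ∈ (0,1). Then for any initialization x_0, the sequence x_{k+1} = (1−α)x_k + α G(x_k) converges to a fixed point of G. -/

import Mathlib

open Filter Topology Metric

lemma km_combo {E : Type*} [NormedAddCommGroup E] [InnerProductSpace ℝ E]
    (α : ℝ) (a b : E) :
    ‖(1-α) • a + α • b‖^2 = (1-α)*‖a‖^2 + α*‖b‖^2 - α*(1-α)*‖a-b‖^2 := by
  have h1 := norm_add_sq_real ((1-α) • a) (α • b)
  have h2 := norm_sub_sq_real a b
  simp only [norm_smul, real_inner_smul_left, real_inner_smul_right, mul_pow, sq_abs,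
    Real.norm_eq_abs] at h1
  rw [h1, h2]
  ring

/-- Krasnosel'skiĭ–Mann in finite dimensions: if `G : ℝ^N → ℝ^N` is non-expansive with a
nonempty fixed-point set and `α ∈ (0,1)`, then the averaged iteration
`x_{k+1} = (1-α)x_k + α G(x_k)` converges to a fixed point of `G`. -/
theorem krasnoselskii_mann_averaged_iteration_converges
    {N : ℕ} (G : EuclideanSpace ℝ (Fin N) → EuclideanSpace ℝ (Fin N))
    (hG : ∀ x z, ‖G x - G z‖ ≤ ‖x - z‖)
    (hfix : ∃ w, G w = w)
    (α : ℝ) (hα0 : 0 < α) (hα1 : α < 1)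
    (x : ℕ → EuclideanSpace ℝ (Fin N))
    (hrec : ∀ k, x (k + 1) = (1 - α) • x k + α • G (x k)) :
    ∃ xstar, G xstar = xstar ∧ Filter.Tendsto x Filter.atTop (nhds xstar) := by
  obtain ⟨w, hw⟩ := hfix
  have hc : 0 < α * (1 - α) := mul_pos hα0 (by linarith)
  -- key one-step inequality w.r.t. any fixed point
  have step : ∀ z, G z = z → ∀ k,
      ‖x (k+1) - z‖^2 ≤ ‖x k - z‖^2 - α*(1-α)*‖x k - G (x k)‖^2 := by
    intro z hz k
    have hx1 : x (k+1) - z = (1-α) • (x k - z) + α • (G (x k) - z) := by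
      rw [hrec k]; module
    have h2 := km_combo α (x k - z) (G (x k) - z)
    have h3 : (x k - z) - (G (x k) - z) = x k - G (x k) := by abel
    rw [h3] at h2
    have h4 : ‖G (x k) - z‖ ≤ ‖x k - z‖ := by
      conv_lhs => rw [← hz]
      exact hG _ _
    rw [hx1, h2]
    nlinarith [norm_nonneg (x k - z), norm_nonneg (G (x k) - z),
      mul_le_mul h4 h4 (norm_nonneg _) (norm_nonneg _), hα0.le, sq_abs ‖x k - z‖]
  -- Fejér monotonicity of norms
  have fej : ∀ z, G z = z → Antitone fun k => ‖x k - z‖ := by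
    intro z hz
    apply antitone_nat_of_succ_le
    intro k
    have h := step z hz k
    have hn : 0 ≤ α*(1-α)*‖x k - G (x k)‖^2 := by positivity
    nlinarith [norm_nonneg (x (k+1) - z), norm_nonneg (x k - z)]
  -- the norms to w converge (antitone, bounded below)
  have hbddw : BddBelow (Set.range fun k => ‖x k - w‖) := by
    refine ⟨0, ?_⟩; rintro y ⟨k, rfl⟩; exact norm_nonneg _
  have hlimw : Tendsto (fun k => ‖x k - w‖) atTop (𝓝 (⨅ k, ‖x k - w‖)) :=
    tendsto_atTop_ciInf (fej w hw) hbddw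
  -- asymptotic regularity: ‖x k - G (x k)‖ → 0
  have hd : Tendsto (fun k => ‖x k - w‖^2) atTop (𝓝 ((⨅ k, ‖x k - w‖)^2)) :=
    hlimw.pow 2
  have hd1 : Tendsto (fun k => ‖x (k+1) - w‖^2) atTop (𝓝 ((⨅ k, ‖x k - w‖)^2)) :=
    hd.comp (tendsto_add_atTop_nat 1)
  have hdiff : Tendsto (fun k => ‖x k - w‖^2 - ‖x (k+1) - w‖^2) atTop (𝓝 0) := by
    have := hd.sub hd1
    simpa using this
  have hsq0 : Tendsto (fun k => α*(1-α)*‖x k - G (x k)‖^2) atTop (𝓝 0) := by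
    refine squeeze_zero (g := fun k => ‖x k - w‖^2 - ‖x (k+1) - w‖^2)
      (fun k => by positivity) (fun k => by
        show α*(1-α)*‖x k - G (x k)‖^2 ≤ ‖x k - w‖^2 - ‖x (k+1) - w‖^2
        have := step w hw k; linarith) hdiff
  have hsq0' : Tendsto (fun k => ‖x k - G (x k)‖^2) atTop (𝓝 0) := by
    have := hsq0.const_mul (α*(1-α))⁻¹
    simp only [mul_zero] at this
    convert this using 2 with k
    rw [← mul_assoc, inv_mul_cancel₀ hc.ne', one_mul]
  have hs0 : Tendsto (fun k => ‖x k - G (x k)‖) atTop (𝓝 0) := by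
    have h := (Real.continuous_sqrt.tendsto 0).comp hsq0'
    simp only [Function.comp_def, Real.sqrt_zero] at h
    convert h using 2 with k
    rw [Real.sqrt_sq (norm_nonneg _)]
  have hv0 : Tendsto (fun k => x k - G (x k)) atTop (𝓝 0) :=
    tendsto_zero_iff_norm_tendsto_zero.mpr hs0
  -- bounded, extract convergent subsequence
  have hball : ∀ k, x k ∈ closedBall w (‖x 0 - w‖) := by
    intro k
    rw [mem_closedBall, dist_eq_norm]
    exact fej w hw (Nat.zero_le k)
  obtain ⟨a, -, φ, hφ, hconv⟩ :=
    (isCompact_closedBall w (‖x 0 - w‖)).tendsto_subseq hball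
  -- G is continuous
  have hGcont : Continuous G := by
    have : LipschitzWith 1 G := by
      apply LipschitzWith.of_dist_le_mul
      intro p q
      rw [dist_eq_norm, dist_eq_norm]
      simpa using hG p q
    exact this.continuous
  -- a is a fixed point
  have hGa : G a = a := by
    have h1 : Tendsto (fun n => G (x (φ n))) atTop (𝓝 (G a)) :=
      (hGcont.tendsto a).comp hconv
    have h2 : Tendsto (fun n => G (x (φ n))) atTop (𝓝 a) := by
      have heq : (fun n => G (x (φ n)))
          = fun n => x (φ n) - (x (φ n) - G (x (φ n))) := by
        funext n; abel
      rw [heq]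
      have hsub : Tendsto (fun n => x (φ n) - G (x (φ n))) atTop (𝓝 0) :=
        hv0.comp hφ.tendsto_atTop
      simpa using hconv.sub hsub
    exact tendsto_nhds_unique h1 h2
  -- Fejér w.r.t. a plus convergent subsequence gives full convergence
  have hbdda : BddBelow (Set.range fun k => ‖x k - a‖) := by
    refine ⟨0, ?_⟩; rintro y ⟨k, rfl⟩; exact norm_nonneg _
  have hlima : Tendsto (fun k => ‖x k - a‖) atTop (𝓝 (⨅ k, ‖x k - a‖)) :=
    tendsto_atTop_ciInf (fej a hGa) hbdda
  have hsub0 : Tendsto (fun n => ‖x (φ n) - a‖) atTop (𝓝 0) := by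
    have := tendsto_iff_norm_sub_tendsto_zero.mp hconv
    simpa [Function.comp_def] using this
  have hsubi : Tendsto (fun n => ‖x (φ n) - a‖) atTop (𝓝 (⨅ k, ‖x k - a‖)) :=
    hlima.comp hφ.tendsto_atTop
  have h0 : (⨅ k, ‖x k - a‖) = 0 := tendsto_nhds_unique hsubi hsub0
  refine ⟨a, hGa, ?_⟩
  rw [tendsto_iff_norm_sub_tendsto_zero]
  rw [h0] at hlima
  exact hlima
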